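/- For every composition (n_1,…,n_k) of n (i.e., positive integers with n_1+⋯+n_k = n), the ⋄-product p_{n_1} ⋄ p_{n_2} ⋄ ⋯ ⋄ p_{n_k} of identity surjections equals D^n_{⊆{n_1, n_1+n_2, …, n_1+⋯+n_{k-1}}}, the sum of all surjections f ∈ Sj_n whose descent set is contained in {n_1, n_1+n_2, …, n_1+⋯+n_{k-1}}. -/

import Mathlib

open scoped Classical

noncomputable section

/-- Number of distinct letters of `w` smaller than `a`. -/
def rank (w : List ℕ) (a : ℕ) : ℕ := (w.dedup.filter (fun b => b < a)).length

/-- The packing of a word over the alphabet `ℕ` (letters are 0-indexed). -/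
def pack (w : List ℕ) : List ℕ := w.map (rank w)

/-- A packed word, i.e. a word equal to its own packing.  Packed words of length `n`
whose set of letters is `{0,…,k-1}` are exactly the surjections `[n] ↠ [k]`
(written with 0-indexed values). -/
def Packed (w : List ℕ) : Prop := pack w = w

/-- The type of surjections, encoded as packed words. -/
abbrev PW := {w : List ℕ // Packed w}

/-- `𝐒𝐣`, the free `ℚ`-vector space on the set of all surjections. -/
abbrev Sj := PW →₀ ℚ

/-- All lists of length `N` with letters `< N`. -/
def candidates (N : ℕ) : Finset (List ℕ) :=
  Finset.image (fun v : Fin N → Fin N => List.ofFn (fun i => (v i : ℕ))) Finset.univ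

/-- The (finite) set of surjections `h` appearing in the product `f ⋄ g`
of two surjections: the packed words `h` of length `|f| + |g|` such that
`pack` of the first `|f|` letters of `h` is `f` and `pack` of the remaining
letters is `g`. -/
def diamondSet (f g : List ℕ) : Finset PW :=
  ((candidates (f.length + g.length)).filter
    (fun w => Packed w ∧ pack (w.take f.length) = f ∧ pack (w.drop f.length) = g)).subtype Packed

/-- The product of two basis elements of `𝐒𝐣`. -/
def diamondPW (f g : PW) : Sj := ∑ h ∈ diamondSet f.1 g.1, Finsupp.single h 1

/-- The bilinear extension `⋄` of the product of surjections to `𝐒𝐣`. -/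
def diamond (F G : Sj) : Sj :=
  F.sum fun f a => G.sum fun g b => (a * b) • diamondPW f g

/-- The empty surjection from `[0] = ∅` to itself. -/
def emptyPW : PW := ⟨[], rfl⟩

/-- The unit of `𝐒𝐣`: the empty surjection. -/
def oneSj : Sj := Finsupp.single emptyPW 1

/-- Descent set (with positions written 1-indexed, as subsets of `[n-1] = {1,…,n-1}`):
`i ∈ Desc(f)` iff `1 ≤ i ≤ n-1` and `f(i) ≥ f(i+1)`. -/
def descSet (w : List ℕ) : Finset ℕ :=
  (Finset.Icc 1 (w.length - 1)).filter (fun i => w.getD i 0 ≤ w.getD (i - 1) 0)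

/-- The (finite) set of all surjections with source `[n]`. -/
def SjWords (n : ℕ) : Finset PW :=
  ((candidates n).filter Packed).subtype Packed

/-- `D^n_{⊆ I}`: the sum of all surjections from `[n]` with descent set contained in `I`. -/
def Dsub (n : ℕ) (I : Finset ℕ) : Sj :=
  ∑ f ∈ (SjWords n).filter (fun f => descSet f.1 ⊆ I), Finsupp.single f 1

/-- `D^n_I`: the sum of all surjections from `[n]` with descent set equal to `I`. -/
def Deq (n : ℕ) (I : Finset ℕ) : Sj :=
  ∑ f ∈ (SjWords n).filter (fun f => descSet f.1 = I), Finsupp.single f 1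

lemma length_filter_lt_range (n i : ℕ) :
    ((List.range n).filter (fun x => x < i)).length = min i n := by
  induction n with
  | zero => simp
  | succ n ih =>
    rw [List.range_succ, List.filter_append, List.length_append, ih]
    by_cases h : n < i
    · simp [h]; omega
    · simp [h]; omega

lemma packed_range (n : ℕ) : Packed (List.range n) := by
  unfold Packed pack rank
  rw [List.dedup_eq_self.mpr (List.nodup_range (n := n))]
  apply List.ext_getElem (by simp)
  intro i h1 h2
  simp only [List.getElem_map, List.getElem_range, length_filter_lt_range]
  have : i < n := by simpa using h2
  omega

/-- `p_n`, the identity surjection of `[n]` (0-indexed: the word `0 1 ⋯ (n-1)`). -/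
def pWord (n : ℕ) : PW := ⟨List.range n, packed_range n⟩

/-- The set `{n₁, n₁+n₂, …, n₁+⋯+n_{k-1}}` of proper partial sums of a composition. -/
def psumsSet (c : List ℕ) : Finset ℕ :=
  (Finset.range (c.length - 1)).image (fun i => (c.take (i + 1)).sum)

/-- Iterated `⋄`-product `p_{n₁} ⋄ p_{n₂} ⋄ ⋯ ⋄ p_{n_k}` of identity surjections. -/
def diamondProd (c : List ℕ) : Sj :=
  (c.map (fun m => Finsupp.single (pWord m) (1 : ℚ))).foldr diamond oneSj

lemma mem_candidates {N : ℕ} {w : List ℕ} :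
    w ∈ candidates N ↔ w.length = N ∧ ∀ x ∈ w, x < N := by
  constructor
  · rintro hw
    simp only [candidates, Finset.mem_image] at hw
    obtain ⟨v, -, rfl⟩ := hw
    constructor
    · simp
    · intro x hx
      simp only [List.mem_ofFn] at hx
      obtain ⟨i, rfl⟩ := hx
      exact (v i).isLt
  · rintro ⟨hlen, hlt⟩
    subst hlen
    simp only [candidates, Finset.mem_image]
    refine ⟨fun i => ⟨w.get i, hlt _ (w.get_mem i)⟩, Finset.mem_univ _, ?_⟩
    apply List.ext_getElem (by simp)
    intro i h1 h2
    simp [List.get_eq_getElem]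
lemma rank_eq_card (w : List ℕ) (a : ℕ) :
    rank w a = (w.toFinset.filter (fun b => b < a)).card := by
  rw [rank]
  rw [← List.toFinset_card_of_nodup ((w.nodup_dedup).filter _)]
  congr 1
  ext x
  simp [List.mem_filter, List.mem_toFinset, Finset.mem_filter]
lemma rank_mono (w : List ℕ) {a b : ℕ} (h : a ≤ b) : rank w a ≤ rank w b := by
  rw [rank_eq_card, rank_eq_card]
  apply Finset.card_le_card
  intro x hx
  simp only [Finset.mem_filter] at hx ⊢
  exact ⟨hx.1, lt_of_lt_of_le hx.2 h⟩
lemma rank_strict (w : List ℕ) {a b : ℕ} (ha : a ∈ w) (h : a < b) :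
    rank w a < rank w b := by
  rw [rank_eq_card, rank_eq_card]
  apply Finset.card_lt_card
  constructor
  · intro x hx
    simp only [Finset.mem_filter] at hx ⊢
    exact ⟨hx.1, lt_of_lt_of_le hx.2 h.le⟩
  · intro hsub
    have := hsub (by simp only [Finset.mem_filter, List.mem_toFinset]; exact ⟨ha, h⟩)
    simp at this
lemma rank_lt_iff (w : List ℕ) {a b : ℕ} (ha : a ∈ w) (hb : b ∈ w) :
    rank w a < rank w b ↔ a < b := by
  constructor
  · intro h
    by_contra hab
    exact absurd (rank_mono w (not_lt.mp hab)) (not_le.mpr h)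
  · exact rank_strict w ha
lemma rank_le_iff (w : List ℕ) {a b : ℕ} (ha : a ∈ w) (hb : b ∈ w) :
    rank w a ≤ rank w b ↔ a ≤ b := by
  rw [← not_lt, ← not_lt, not_iff_not]
  exact rank_lt_iff w hb ha
lemma rank_lt_length {w : List ℕ} {a : ℕ} (ha : a ∈ w) : rank w a < w.length := by
  rw [rank_eq_card]
  calc (w.toFinset.filter (fun b => b < a)).card < w.toFinset.card := by
        apply Finset.card_lt_card
        constructor
        · exact Finset.filter_subset _ _
        · intro hsub
          have := hsub (List.mem_toFinset.mpr ha)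
          simp at this
    _ ≤ w.length := w.toFinset_card_le
lemma pack_length (w : List ℕ) : (pack w).length = w.length := by simp [pack]
lemma getD_mem {w : List ℕ} {i : ℕ} (h : i < w.length) : w.getD i 0 ∈ w := by
  rw [List.getD_eq_getElem _ _ h]
  exact List.getElem_mem h
lemma pack_getD {w : List ℕ} {i : ℕ} (h : i < w.length) :
    (pack w).getD i 0 = rank w (w.getD i 0) := by
  rw [List.getD_eq_getElem _ _ (by simpa [pack_length] using h),
      List.getD_eq_getElem _ _ h]
  simp [pack]
lemma mem_pack {w : List ℕ} {x : ℕ} : x ∈ pack w ↔ ∃ a ∈ w, rank w a = x := by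
  simp [pack]
lemma pack_lt_length {w : List ℕ} {x : ℕ} (hx : x ∈ pack w) : x < w.length := by
  obtain ⟨a, ha, rfl⟩ := mem_pack.mp hx
  exact rank_lt_length ha
lemma mem_descSet {w : List ℕ} {i : ℕ} :
    i ∈ descSet w ↔ 1 ≤ i ∧ i ≤ w.length - 1 ∧ w.getD i 0 ≤ w.getD (i - 1) 0 := by
  simp [descSet, Finset.mem_filter, and_assoc]
lemma descSet_pack (w : List ℕ) : descSet (pack w) = descSet w := by
  ext i
  simp only [mem_descSet, pack_length]
  constructor <;> rintro ⟨h1, h2, h3⟩ <;> refine ⟨h1, h2, ?_⟩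
  · have hi : i < w.length := by omega
    have hi' : i - 1 < w.length := by omega
    rw [pack_getD hi, pack_getD hi'] at h3
    exact (rank_le_iff w (getD_mem hi) (getD_mem hi')).mp h3
  · have hi : i < w.length := by omega
    have hi' : i - 1 < w.length := by omega
    rw [pack_getD hi, pack_getD hi']
    exact (rank_le_iff w (getD_mem hi) (getD_mem hi')).mpr h3
lemma rank_rank {w : List ℕ} {a : ℕ} (ha : a ∈ w) :
    rank (pack w) (rank w a) = rank w a := by
  conv_lhs => rw [rank_eq_card]
  have himg : (pack w).toFinset = w.toFinset.image (rank w) := by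
    ext x
    simp [mem_pack, List.mem_toFinset, Finset.mem_image]
  rw [himg, Finset.filter_image]
  have hfe : (w.toFinset.filter fun b => rank w b < rank w a)
      = w.toFinset.filter (fun b => b < a) := by
    apply Finset.filter_congr
    intro b hb
    exact rank_lt_iff w (List.mem_toFinset.mp hb) ha
  rw [hfe, Finset.card_image_of_injOn, ← rank_eq_card]
  intro x hx y hy hxy
  simp only [Finset.coe_filter, Set.mem_setOf_eq, List.mem_toFinset] at hx hy
  have hxy' : rank w x = rank w y := hxy
  by_contra hc
  rcases Nat.lt_or_ge x y with h'|h'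
  · have : rank w x < rank w y := rank_strict w hx.1 h'; omega
  · have : rank w y < rank w x := rank_strict w hy.1 (by omega); omega
lemma packed_pack (w : List ℕ) : Packed (pack w) := by
  unfold Packed
  have : pack (pack w) = (pack w).map (rank (pack w)) := rfl
  rw [this, pack, List.map_map]
  apply List.map_congr_left
  intro a ha
  exact rank_rank ha
lemma descSet_range (n : ℕ) : descSet (List.range n) = ∅ := by
  ext i
  simp only [mem_descSet, Finset.notMem_empty, iff_false, List.length_range]
  rintro ⟨h1, h2, h3⟩
  rw [List.getD_eq_getElem _ _ (by simp; omega), List.getD_eq_getElem _ _ (by simp; omega)] at h3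
  simp only [List.getElem_range] at h3
  omega
lemma pack_eq_range {w : List ℕ} (h : descSet w = ∅) : pack w = List.range w.length := by
  have hmono : ∀ i j, i < j → j < w.length → w.getD i 0 < w.getD j 0 := by
    intro i j hij hj
    induction j with
    | zero => omega
    | succ j ih =>
      have hstep : w.getD j 0 < w.getD (j+1) 0 := by
        by_contra hc
        have : (j+1) ∈ descSet w := by
          rw [mem_descSet]
          refine ⟨by omega, by omega, by simpa using not_lt.mp hc⟩
        rw [h] at this; simp at this
      rcases Nat.lt_or_ge i j with h'|h'
      · exact lt_trans (ih h' (by omega)) hstep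
      · have : i = j := by omega
        subst this; exact hstep
  apply List.ext_getElem (by simp [pack_length])
  intro i h1 h2
  simp only [List.getElem_range]
  have hiw : i < w.length := by simpa [pack_length] using h1
  have : (pack w)[i] = rank w (w.getD i 0) := by
    rw [← List.getD_eq_getElem _ 0 h1, pack_getD hiw]
  rw [this, rank_eq_card]
  have hset : w.toFinset.filter (fun b => b < w.getD i 0) =
      (Finset.range i).image (fun j => w.getD j 0) := by
    ext b
    simp only [Finset.mem_filter, List.mem_toFinset, Finset.mem_image, Finset.mem_range]
    constructor
    · rintro ⟨hbw, hb⟩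
      obtain ⟨j, hj, rfl⟩ := List.mem_iff_getElem.mp hbw
      refine ⟨j, ?_, by rw [List.getD_eq_getElem _ _ hj]⟩
      by_contra hc
      rcases Nat.lt_or_ge i j with h'|h'
      · have := hmono i j h' hj
        rw [List.getD_eq_getElem _ _ hj] at this; omega
      · have : i = j := by omega
        subst this
        rw [List.getD_eq_getElem _ _ hj] at hb; omega
    · rintro ⟨j, hj, rfl⟩
      exact ⟨getD_mem (by omega), hmono j i hj hiw⟩
  rw [hset, Finset.card_image_of_injOn, Finset.card_range]
  intro x hx y hy hxy
  simp only [Finset.mem_coe, Finset.mem_range] at hx hy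
  have hxy' : w.getD x 0 = w.getD y 0 := hxy
  by_contra hc
  rcases Nat.lt_or_ge x y with h'|h'
  · have := hmono x y h' (by omega); omega
  · have := hmono y x (by omega) (by omega); omega
lemma descSet_eq_empty_of_pack_range {w : List ℕ} (h : pack w = List.range w.length) :
    descSet w = ∅ := by
  rw [← descSet_pack, h, descSet_range]
lemma getD_take {w : List ℕ} {m i : ℕ} (h : i < m) :
    (w.take m).getD i 0 = w.getD i 0 := by
  rw [List.getD_eq_getElem?_getD, List.getD_eq_getElem?_getD, List.getElem?_take, if_pos h]
lemma getD_drop {w : List ℕ} {m j : ℕ} :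
    (w.drop m).getD j 0 = w.getD (m + j) 0 := by
  rw [List.getD_eq_getElem?_getD, List.getD_eq_getElem?_getD, List.getElem?_drop]
lemma mem_descSet_take {w : List ℕ} {m i : ℕ} (hm : m ≤ w.length) :
    i ∈ descSet (w.take m) ↔ 1 ≤ i ∧ i ≤ m - 1 ∧ i ∈ descSet w := by
  simp only [mem_descSet, List.length_take]
  constructor
  · rintro ⟨h1, h2, h3⟩
    rw [getD_take (by omega), getD_take (by omega)] at h3
    refine ⟨h1, by omega, h1, by omega, h3⟩
  · rintro ⟨h1, h2, -, -, h3⟩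
    rw [getD_take (by omega), getD_take (by omega)]
    refine ⟨h1, by omega, h3⟩
lemma mem_descSet_drop {w : List ℕ} {m j : ℕ} (hj : 1 ≤ j) :
    j ∈ descSet (w.drop m) ↔ m + j ∈ descSet w := by
  simp only [mem_descSet, List.length_drop, getD_drop]
  have : m + j - 1 = m + (j - 1) := by omega
  rw [this, ← getD_drop, ← getD_drop]
  constructor
  · rintro ⟨h1, h2, h3⟩
    exact ⟨by omega, by omega, h3⟩
  · rintro ⟨h1, h2, h3⟩
    exact ⟨hj, by omega, h3⟩
lemma packed_lt_length {w : List ℕ} (hw : Packed w) {x : ℕ} (hx : x ∈ w) : x < w.length :=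
  pack_lt_length (by rwa [hw])
lemma mem_diamondSet {f g : List ℕ} {h : PW} :
    h ∈ diamondSet f g ↔ h.1.length = f.length + g.length ∧
      pack (h.1.take f.length) = f ∧ pack (h.1.drop f.length) = g := by
  simp only [diamondSet, Finset.mem_subtype, Finset.mem_filter, mem_candidates]
  constructor
  · rintro ⟨⟨hl, -⟩, -, h1, h2⟩; exact ⟨hl, h1, h2⟩
  · rintro ⟨hl, h1, h2⟩
    exact ⟨⟨hl, fun x hx => hl ▸ packed_lt_length h.2 hx⟩, h.2, h1, h2⟩
lemma mem_SjWords {n : ℕ} {f : PW} : f ∈ SjWords n ↔ f.1.length = n := by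
  simp only [SjWords, Finset.mem_subtype, Finset.mem_filter, mem_candidates]
  constructor
  · rintro ⟨⟨hl, -⟩, -⟩; exact hl
  · intro hl
    exact ⟨⟨hl, fun x hx => hl ▸ packed_lt_length f.2 hx⟩, f.2⟩
lemma diamond_single_sum (f : PW) (S : Finset PW) :
    diamond (Finsupp.single f 1) (∑ g ∈ S, Finsupp.single g 1) =
      ∑ g ∈ S, diamondPW f g := by
  unfold diamond
  rw [Finsupp.sum_single_index (by simp)]
  simp only [one_mul]
  rw [← Finsupp.linearCombination_apply (v := diamondPW f) ℚ]
  rw [map_sum]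
  simp [Finsupp.linearCombination_single]
lemma diamond_step (m n : ℕ) (I : Finset ℕ) :
    diamond (Finsupp.single (pWord m) 1) (Dsub n I)
      = Dsub (m + n) (insert m (I.image (· + m))) := by
  rw [Dsub, diamond_single_sum]
  simp only [diamondPW]
  have hdisj : ((SjWords n).filter (fun f => descSet f.1 ⊆ I) : Set PW).PairwiseDisjoint
      (fun g => diamondSet (pWord m).1 g.1) := by
    intro g1 _ g2 _ hne
    simp only [Function.onFun]
    rw [Finset.disjoint_left]
    intro h h1 h2
    apply hne
    rw [mem_diamondSet] at h1 h2
    apply Subtype.ext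
    rw [← h1.2.2, ← h2.2.2]
  rw [← Finset.sum_biUnion hdisj, Dsub]
  congr 1
  ext h
  simp only [Finset.mem_biUnion, Finset.mem_filter]
  have hrm : (pWord m).1 = List.range m := rfl
  constructor
  · rintro ⟨g, hg, hh⟩
    rw [mem_diamondSet, hrm, List.length_range] at hh
    obtain ⟨hlen, htake, hdrop⟩ := hh
    have hgn : g.1.length = n := mem_SjWords.mp hg.1
    have hhl : h.1.length = m + n := by rw [hlen, hgn]
    refine ⟨mem_SjWords.mpr hhl, ?_⟩
    intro i hi
    have hi' := mem_descSet.mp hi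
    rcases Nat.lt_trichotomy i m with hc|hc|hc
    · exfalso
      have : i ∈ descSet (h.1.take m) :=
        (mem_descSet_take (by omega)).mpr ⟨hi'.1, by omega, hi⟩
      rw [← descSet_pack, htake, descSet_range] at this
      simp at this
    · subst hc; exact Finset.mem_insert_self _ _
    · apply Finset.mem_insert_of_mem
      rw [Finset.mem_image]
      refine ⟨i - m, ?_, by omega⟩
      apply hg.2
      have hmem : i - m ∈ descSet (h.1.drop m) := by
        rw [mem_descSet_drop (by omega)]
        have heq : m + (i - m) = i := by omega
        rw [heq]; exact hi
      rwa [← descSet_pack, hdrop] at hmem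
  · rintro ⟨hsj, hdes⟩
    have hhl : h.1.length = m + n := mem_SjWords.mp hsj
    set g : PW := ⟨pack (h.1.drop m), packed_pack _⟩ with hgdef
    have hgn : g.1.length = n := by
      simp [hgdef, pack_length, List.length_drop, hhl]
    refine ⟨g, ⟨mem_SjWords.mpr hgn, ?_⟩, ?_⟩
    · intro j hj
      rw [hgdef] at hj
      simp only at hj
      rw [descSet_pack] at hj
      have hj1 : 1 ≤ j := (mem_descSet.mp hj).1
      have : m + j ∈ descSet h.1 := (mem_descSet_drop hj1).mp hj
      have := hdes this
      rcases Finset.mem_insert.mp this with h'|h'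
      · omega
      · obtain ⟨x, hx, hx'⟩ := Finset.mem_image.mp h'
        have : x = j := by omega
        rwa [← this]
    · rw [mem_diamondSet, hrm, List.length_range, hgn]
      refine ⟨hhl, ?_, rfl⟩
      have hdt : descSet (h.1.take m) = ∅ := by
        ext i
        simp only [Finset.notMem_empty, iff_false]
        intro hi
        obtain ⟨h1, h2, h3⟩ := (mem_descSet_take (by omega)).mp hi
        have := hdes h3
        rcases Finset.mem_insert.mp this with h'|h'
        · omega
        · obtain ⟨x, -, hx'⟩ := Finset.mem_image.mp h'
          omega
      have := pack_eq_range hdt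
      rwa [List.length_take, hhl, min_eq_left (by omega)] at this
lemma descSet_subset_Icc (w : List ℕ) : descSet w ⊆ Finset.Icc 1 (w.length - 1) :=
  Finset.filter_subset _ _
lemma Dsub_congr {n : ℕ} {I J : Finset ℕ}
    (hIJ : ∀ x ∈ Finset.Icc 1 (n - 1), (x ∈ I ↔ x ∈ J)) : Dsub n I = Dsub n J := by
  unfold Dsub
  congr 1
  apply Finset.filter_congr
  intro f hf
  have hlen : f.1.length = n := mem_SjWords.mp hf
  constructor <;> intro hsub x hx
  · exact (hIJ x (hlen ▸ descSet_subset_Icc f.1 hx)).mp (hsub hx)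
  · exact (hIJ x (hlen ▸ descSet_subset_Icc f.1 hx)).mpr (hsub hx)
lemma Dsub_zero (I : Finset ℕ) : Dsub 0 I = oneSj := by
  unfold Dsub oneSj
  have h1 : (SjWords 0).filter (fun f => descSet f.1 ⊆ I) = {emptyPW} := by
    ext f
    simp only [Finset.mem_filter, Finset.mem_singleton, mem_SjWords, List.length_eq_zero_iff]
    constructor
    · rintro ⟨hf, -⟩
      exact Subtype.ext hf
    · rintro rfl
      refine ⟨rfl, ?_⟩
      intro x hx
      have := mem_descSet.mp hx
      simp only [emptyPW, List.length_nil] at this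
      omega
  rw [h1, Finset.sum_singleton]
lemma psumsSet_cons (m : ℕ) (L : List ℕ) (hL : L ≠ []) :
    psumsSet (m :: L) = insert m ((psumsSet L).image (· + m)) := by
  have hlen : 1 ≤ L.length := List.length_pos_iff.mpr hL
  ext x
  simp only [psumsSet, Finset.mem_image, Finset.mem_range, Finset.mem_insert,
    List.length_cons, Nat.add_sub_cancel, Finset.mem_image]
  constructor
  · rintro ⟨i, hi, rfl⟩
    cases i with
    | zero => left; simp
    | succ j =>
      right
      refine ⟨(L.take (j + 1)).sum, ⟨j, by omega, rfl⟩, ?_⟩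
      simp [List.take_succ_cons, List.sum_cons]
      omega
  · rintro (rfl | ⟨y, ⟨j, hj, rfl⟩, rfl⟩)
    · exact ⟨0, by omega, by simp⟩
    · refine ⟨j + 1, by omega, ?_⟩
      simp [List.take_succ_cons, List.sum_cons]
      omega

/-- For every composition `(n₁,…,n_k)` of `n` (positive entries summing
to `n`), the `⋄`-product `p_{n₁} ⋄ p_{n₂} ⋄ ⋯ ⋄ p_{n_k}` of identity surjections equals
`D^n_{⊆{n₁, n₁+n₂, …, n₁+⋯+n_{k-1}}}`, the sum of all surjections from `[n]` whose descent
set is contained in `{n₁, n₁+n₂, …, n₁+⋯+n_{k-1}}`. -/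
theorem diamondProd_p_eq_Dsub (n : ℕ) (L : List ℕ) (hL : L ≠ [])
    (hpos : ∀ x ∈ L, 0 < x) (hsum : L.sum = n) :
    diamondProd L = Dsub n (psumsSet L) := by
  induction L generalizing n with
  | nil => exact absurd rfl hL
  | cons m L ih =>
    have hdp : diamondProd (m :: L) = diamond (Finsupp.single (pWord m) 1) (diamondProd L) := rfl
    have hm : 0 < m := hpos m List.mem_cons_self
    rcases eq_or_ne L [] with rfl | hL'
    · have h0 : diamondProd ([] : List ℕ) = oneSj := rfl
      have hmn : m = n := by simpa using hsum
      subst hmn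
      rw [hdp, h0, ← Dsub_zero (∅ : Finset ℕ), diamond_step]
      have hps : psumsSet [m] = ∅ := by simp [psumsSet]
      rw [hps]
      apply Dsub_congr
      intro x hx
      simp only [Finset.mem_Icc] at hx
      simp only [Finset.image_empty, Finset.mem_insert, Finset.notMem_empty, or_false,
        iff_false]
      omega
    · rw [hdp, ih _ hL' (fun x hx => hpos x (List.mem_cons_of_mem _ hx)) rfl, diamond_step]
      have hn : m + L.sum = n := by
        rw [← hsum, List.sum_cons]
      rw [hn, psumsSet_cons m L hL']

end
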